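/- arXiv:2408.00751 — 2 statements merged into one kernel-verified Lean document; each statement's English description precedes it below -/
import Mathlib

section
/- Let C be a convex set, ψ a differentiable strongly convex function on C, g a vector, η > 0, τ₀ ≥ 0, and x⁽¹⁾ = argmin_{x∈C} { ⟨g,x⟩ + τ₀ψ(x) + (1/η)D_ψ(x, x⁽⁰⁾) }. Then for any x⁽²⁾ ∈ C: ητ₀ψ(x⁽¹⁾) − ητ₀ψ(x⁽²⁾) + η⟨g, x⁽¹⁾ − x⁽²⁾⟩ ≤ D_ψ(x⁽²⁾, x⁽⁰⁾) − (1+ητ₀)D_ψ(x⁽²⁾, x⁽¹⁾) − D_ψ(x⁽¹⁾, x⁽⁰⁾). -/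
open scoped RealInnerProductSpace

/-- Fundamental inequality for the regularized mirror-descent step. -/
theorem stmt6 {n : ℕ} (C : Set (EuclideanSpace ℝ (Fin n))) (hC : Convex ℝ C)
    (ψ : EuclideanSpace ℝ (Fin n) → ℝ)
    (ψ' : EuclideanSpace ℝ (Fin n) → EuclideanSpace ℝ (Fin n))
    (hgrad : ∀ x, HasGradientAt ψ (ψ' x) x)
    (c : ℝ) (hc : 0 < c)
    (hsc : ∀ x y, ψ y + ⟪ψ' y, x - y⟫ + c / 2 * ‖x - y‖ ^ 2 ≤ ψ x)
    (g x0 x1 : EuclideanSpace ℝ (Fin n)) (η τ₀ : ℝ) (hη : 0 < η) (hτ : 0 ≤ τ₀)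
    (hx0 : x0 ∈ C) (hx1 : x1 ∈ C)
    (D : EuclideanSpace ℝ (Fin n) → EuclideanSpace ℝ (Fin n) → ℝ)
    (hD : ∀ x y, D x y = ψ x - ψ y - ⟪ψ' y, x - y⟫)
    (hmin : ∀ x ∈ C, ⟪g, x1⟫ + τ₀ * ψ x1 + (1 / η) * D x1 x0 ≤
      ⟪g, x⟫ + τ₀ * ψ x + (1 / η) * D x x0) :
    ∀ x2 ∈ C, η * τ₀ * ψ x1 - η * τ₀ * ψ x2 + η * ⟪g, x1 - x2⟫ ≤
      D x2 x0 - (1 + η * τ₀) * D x2 x1 - D x1 x0 := by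
  intro x2 hx2
  -- the objective function
  set F : EuclideanSpace ℝ (Fin n) → ℝ := fun x =>
    ⟪g, x⟫ + (τ₀ * ψ x + (1 / η) * (ψ x - ψ x0 - ⟪ψ' x0, x - x0⟫)) with hF
  -- derivatives of the pieces
  have h1 : HasFDerivAt (fun x : EuclideanSpace ℝ (Fin n) => ⟪g, x⟫)
      (innerSL ℝ g) x1 := (innerSL ℝ g).hasFDerivAt
  have h2 : HasFDerivAt ψ
      ((InnerProductSpace.toDual ℝ (EuclideanSpace ℝ (Fin n))) (ψ' x1)) x1 :=
    hasGradientAt_iff_hasFDerivAt.mp (hgrad x1)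
  have h3 : HasFDerivAt (fun x : EuclideanSpace ℝ (Fin n) => ⟪ψ' x0, x - x0⟫)
      (innerSL ℝ (ψ' x0)) x1 := by
    have := ((innerSL ℝ (ψ' x0)).hasFDerivAt (x := x1)).sub_const ⟪ψ' x0, x0⟫
    simpa [inner_sub_right] using this
  have hb := (h2.sub_const (ψ x0)).sub h3
  have hF' := h1.add ((h2.const_mul τ₀).add (hb.const_mul (1 / η)))
  -- x1 is a local min of F on C
  have hminF : IsLocalMinOn F C x1 := by
    apply eventually_nhdsWithin_of_forall
    intro x hx
    have := hmin x hx
    rw [hD, hD] at this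
    simp only [hF]
    linarith
  -- first-order optimality
  have hcone : x2 - x1 ∈ posTangentConeAt C x1 :=
    sub_mem_posTangentConeAt_of_segment_subset (hC.segment_subset hx1 hx2)
  have key := hminF.hasFDerivWithinAt_nonneg hF'.hasFDerivWithinAt hcone
  simp only [ContinuousLinearMap.add_apply, ContinuousLinearMap.smul_apply,
    ContinuousLinearMap.sub_apply, innerSL_apply_apply, InnerProductSpace.toDual_apply_apply,
    smul_eq_mul] at key
  -- multiply by η
  set a := ⟪g, x2 - x1⟫ with ha
  set b := ⟪ψ' x1, x2 - x1⟫ with hbd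
  set e := ⟪ψ' x0, x2 - x1⟫ with he
  have key2 : 0 ≤ η * a + η * τ₀ * b + (b - e) := by
    have h := mul_le_mul_of_nonneg_left key hη.le
    have heq : η * (a + (τ₀ * b + 1 / η * (b - e))) = η * a + η * τ₀ * b + (b - e) := by
      field_simp
      ring
    nlinarith
  -- finish with algebra
  rw [hD, hD, hD]
  have e1 : ⟪ψ' x0, x2 - x0⟫ = ⟪ψ' x0, x1 - x0⟫ + e := by
    rw [he]; simp [inner_sub_right]
  have e2 : ⟪g, x1 - x2⟫ = -a := by
    rw [ha]; simp [inner_sub_right]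
  rw [e1, e2]
  nlinarith [key2]
end

section
/- For probability vectors x, x̂ ∈ Δⁿ with x ⪰ γ entrywise (γ ∈ (0,1)), the negative-entropy difference satisfies |∑ₐ xₐ log xₐ − ∑ₐ x̂ₐ log x̂ₐ| ≤ log(1/γ)·‖x − x̂‖₁ + KL(x̂‖x), where KL(x̂‖x) = ∑ₐ x̂ₐ log(x̂ₐ/xₐ). -/
/-- Negative entropy difference bound on a γ-truncated simplex. -/
theorem stmt11 {n : ℕ} (x xh : Fin n → ℝ) (γ : ℝ) (hγ0 : 0 < γ) (hγ1 : γ < 1)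
    (hx0 : ∀ a, γ ≤ x a) (hxs : ∑ a, x a = 1)
    (hxh0 : ∀ a, 0 ≤ xh a) (hxhs : ∑ a, xh a = 1) :
    |(∑ a, x a * Real.log (x a)) - ∑ a, xh a * Real.log (xh a)| ≤
      Real.log (1 / γ) * (∑ a, |x a - xh a|) +
        ∑ a, xh a * Real.log (xh a / x a) := by
  have hxpos : ∀ a, 0 < x a := fun a => lt_of_lt_of_le hγ0 (hx0 a)
  have hx1 : ∀ a, x a ≤ 1 := by
    intro a
    calc x a ≤ ∑ b, x b :=
      Finset.single_le_sum (fun i _ => (hxpos i).le) (Finset.mem_univ a)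
    _ = 1 := hxs
  set L := Real.log (1 / γ) with hL
  have hL0 : 0 ≤ L := Real.log_nonneg (by rw [le_div_iff₀ hγ0]; linarith)
  set S := ∑ a, (x a - xh a) * Real.log (x a) with hSdef
  set K := ∑ a, xh a * Real.log (xh a / x a) with hKdef
  have hident : (∑ a, x a * Real.log (x a)) - ∑ a, xh a * Real.log (xh a) = S - K := by
    rw [hSdef, hKdef, ← Finset.sum_sub_distrib, ← Finset.sum_sub_distrib]
    apply Finset.sum_congr rfl
    intro a _
    rcases eq_or_lt_of_le (hxh0 a) with h | h
    · simp [← h]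
    · rw [Real.log_div (ne_of_gt h) (ne_of_gt (hxpos a))]; ring
  have hK0 : 0 ≤ K := by
    have hterm : ∀ a, xh a - x a ≤ xh a * Real.log (xh a / x a) := by
      intro a
      rcases eq_or_lt_of_le (hxh0 a) with h | h
      · simp [← h]; exact (hxpos a).le
      · have hlog : Real.log (x a / xh a) ≤ x a / xh a - 1 :=
          Real.log_le_sub_one_of_pos (div_pos (hxpos a) h)
        have : Real.log (xh a / x a) = - Real.log (x a / xh a) := by
          rw [← Real.log_inv, inv_div]
        rw [this]
        have := mul_le_mul_of_nonneg_left hlog (hxh0 a)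
        have hx' : xh a * (x a / xh a - 1) = x a - xh a := by
          field_simp
        nlinarith
    calc (0:ℝ) = ∑ a, (xh a - x a) := by rw [Finset.sum_sub_distrib, hxhs, hxs]; ring
    _ ≤ K := Finset.sum_le_sum fun a _ => hterm a
  have hS : |S| ≤ L * ∑ a, |x a - xh a| := by
    calc |S| ≤ ∑ a, |(x a - xh a) * Real.log (x a)| :=
      Finset.abs_sum_le_sum_abs _ _
    _ ≤ ∑ a, L * |x a - xh a| := by
        apply Finset.sum_le_sum
        intro a _
        rw [abs_mul, mul_comm]
        apply mul_le_mul_of_nonneg_right _ (abs_nonneg _)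
        have h1 : Real.log (x a) ≤ 0 := Real.log_nonpos (hxpos a).le (hx1 a)
        have h2 : Real.log γ ≤ Real.log (x a) :=
          Real.log_le_log hγ0 (hx0 a)
        rw [abs_of_nonpos h1, hL, Real.log_div one_ne_zero (ne_of_gt hγ0), Real.log_one]
        linarith
    _ = L * ∑ a, |x a - xh a| := by rw [Finset.mul_sum]
  rw [hident]
  have habs : |S - K| ≤ |S| + K := by
    calc |S - K| ≤ |S| + |K| := abs_sub _ _
    _ = |S| + K := by rw [abs_of_nonneg hK0]
  linarith
end
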